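/- Let e = (1,3,3,1) ∈ ℤ^4, so that Q_19(e) = 0, and let M = {x ∈ ℤ^4 : B_19(x, e) = 0}. Then the subgroup of M generated by e together with all roots of M (i.e., all r ∈ M with Q_19(r) > 0 such that Q_19(r) divides 2·B_19(r, x) for every x ∈ M) is a proper subgroup of M. -/

import Mathlib

/-- The bilinear form `B_p(x,y) = -p·x_0·y_0 + x_1·y_1 + … + x_n·y_n` on `ℤ^{n+1}`. -/
def Bform (p : ℤ) {n : ℕ} (x y : Fin (n + 1) → ℤ) : ℤ :=
  -p * x 0 * y 0 + ∑ i ∈ Finset.univ.filter (fun i : Fin (n + 1) => i ≠ 0), x i * y i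

/-- The quadratic form `Q_p(x) = B_p(x,x)`. -/
def Qform (p : ℤ) {n : ℕ} (x : Fin (n + 1) → ℤ) : ℤ := Bform p x x

/-- The primitive null vector `e`. -/
def eVec : Fin 4 → ℤ := ![1, 3, 3, 1]

lemma Bform_apply (x y : Fin 4 → ℤ) :
    Bform 19 x y = -19 * x 0 * y 0 + (x 1 * y 1 + x 2 * y 2 + x 3 * y 3) := by
  simp [Bform, Finset.sum_filter, Fin.sum_univ_four]

lemma root_parity (r : Fin 4 → ℤ) (hm : Bform 19 r eVec = 0)
    (hq : 0 < Qform 19 r)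
    (hd : ∀ x : Fin 4 → ℤ, Bform 19 x eVec = 0 → Qform 19 r ∣ 2 * Bform 19 r x) :
    (2 : ℤ) ∣ r 1 + r 2 := by
  by_contra hodd
  have hm' := hm
  rw [Bform_apply] at hm'
  simp [eVec] at hm'
  have he : r 3 = 19 * r 0 - 3 * r 1 - 3 * r 2 := by linarith
  have hv1 : Bform 19 ![0,1,0,-3] eVec = 0 := by rw [Bform_apply]; simp [eVec]
  have hv2 : Bform 19 ![0,0,1,-3] eVec = 0 := by rw [Bform_apply]; simp [eVec]
  have e1 : 2 * Bform 19 r ![0,1,0,-3] = 19*(r 1 + r 2 - 6*r 0) + (r 1 - r 2) := by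
    rw [Bform_apply, he]; simp; ring
  have e2 : 2 * Bform 19 r ![0,0,1,-3] = 19*(r 1 + r 2 - 6*r 0) - (r 1 - r 2) := by
    rw [Bform_apply, he]; simp; ring
  have h1 := hd _ hv1; rw [e1] at h1
  have h2 := hd _ hv2; rw [e2] at h2
  have ht2 : Qform 19 r ∣ 2*(r 1 - r 2) := by
    have := dvd_sub h1 h2
    convert this using 1 <;> first | rfl | ring
  have key : 2 * Qform 19 r = 19*(r 1 + r 2 - 6*r 0)^2 + (r 1 - r 2)^2 := by
    rw [Qform, Bform_apply, he]; ring
  have hle : Qform 19 r ≤ |2*(r 1 - r 2)| :=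
    Int.le_of_dvd (abs_pos.mpr (by omega : 2*(r 1 - r 2) ≠ 0))
      ((dvd_abs _ _).mpr ht2)
  have hs : (r 1 + r 2 - 6*r 0) ≤ -1 ∨ 1 ≤ (r 1 + r 2 - 6*r 0) := by omega
  rcases abs_cases (2*(r 1 - r 2)) with ⟨h, _⟩ | ⟨h, _⟩ <;> rw [h] at hle <;>
    rcases hs with hs | hs <;>
    nlinarith [sq_nonneg (r 1 - r 2 - 2), sq_nonneg (r 1 - r 2 + 2),
      sq_nonneg (r 1 + r 2 - 6*r 0)]

def Msub : AddSubgroup (Fin 4 → ℤ) where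
  carrier := {x | Bform 19 x eVec = 0}
  zero_mem' := by simp [Set.mem_setOf_eq, Bform_apply]
  add_mem' := by
    intro a b ha hb
    simp only [Set.mem_setOf_eq, Bform_apply, Pi.add_apply] at *
    linarith
  neg_mem' := by
    intro a ha
    simp only [Set.mem_setOf_eq, Bform_apply, Pi.neg_apply] at *
    linarith

def Ksub : AddSubgroup (Fin 4 → ℤ) where
  carrier := {x | Bform 19 x eVec = 0 ∧ (2:ℤ) ∣ x 1 + x 2}
  zero_mem' := by simp [Set.mem_setOf_eq, Bform_apply]
  add_mem' := by
    intro a b ha hb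
    simp only [Set.mem_setOf_eq, Bform_apply, Pi.add_apply] at *
    constructor
    · linarith [ha.1, hb.1]
    · omega
  neg_mem' := by
    intro a ha
    simp only [Set.mem_setOf_eq, Bform_apply, Pi.neg_apply] at *
    constructor
    · linarith [ha.1]
    · omega

theorem stmt17 :
    Qform 19 eVec = 0 ∧
    ((AddSubgroup.closure (insert eVec
        {r : Fin 4 → ℤ | Bform 19 r eVec = 0 ∧ 0 < Qform 19 r ∧
          ∀ x : Fin 4 → ℤ, Bform 19 x eVec = 0 → Qform 19 r ∣ 2 * Bform 19 r x}) :
        Set (Fin 4 → ℤ)) ⊂ {x : Fin 4 → ℤ | Bform 19 x eVec = 0}) := by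
  set S : Set (Fin 4 → ℤ) := insert eVec
      {r : Fin 4 → ℤ | Bform 19 r eVec = 0 ∧ 0 < Qform 19 r ∧
          ∀ x : Fin 4 → ℤ, Bform 19 x eVec = 0 → Qform 19 r ∣ 2 * Bform 19 r x} with hS
  have heM : Bform 19 eVec eVec = 0 := by rw [Bform_apply]; simp [eVec]
  have hSK : S ⊆ (Ksub : Set (Fin 4 → ℤ)) := by
    rw [hS, Set.insert_subset_iff]
    constructor
    · exact ⟨heM, by decide⟩
    · rintro r ⟨h1, h2, h3⟩
      exact ⟨h1, root_parity r h1 h2 h3⟩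
  have hclK : AddSubgroup.closure S ≤ Ksub := (AddSubgroup.closure_le Ksub).mpr hSK
  refine ⟨heM, ?_⟩
  rw [Set.ssubset_def]
  constructor
  · intro x hx
    exact (hclK hx).1
  · intro hsup
    have hv1 : ![0,1,0,-3] ∈ {x : Fin 4 → ℤ | Bform 19 x eVec = 0} := by
      rw [Set.mem_setOf_eq, Bform_apply]; simp [eVec]
    have := hclK (hsup hv1)
    have h2 := this.2
    simp at h2
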